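/- Let G be a 2-connected chordal graph. If u and v are two vertices with at least one common neighbor, then {u,v} is a P₃-hull set of G. -/

import Mathlib

open SimpleGraph

variable {V : Type*}

/-- The `P₃`-interval operator: add every vertex with at least two neighbors in `S`. -/
def pInterval (G : SimpleGraph V) (S : Set V) : Set V :=
  S ∪ {v | ∃ u w, u ≠ w ∧ u ∈ S ∧ w ∈ S ∧ G.Adj u v ∧ G.Adj w v}

/-- `pIter G S k = I^k[S]`. -/
def pIter (G : SimpleGraph V) (S : Set V) : ℕ → Set V
  | 0 => S
  | k + 1 => pInterval G (pIter G S k)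

/-- `S` is a `P₃`-hull set of `G` (it percolates `G`). -/
def Percolates (G : SimpleGraph V) (S : Set V) : Prop :=
  ∃ k, pIter G S k = Set.univ

/-- Percolation time of a hull set `S`. -/
noncomputable def percTime (G : SimpleGraph V) (S : Set V) : ℕ :=
  sInf {k | pIter G S k = Set.univ}

/-- The least `k` such that `x ∈ I^k[S]`. -/
noncomputable def percTimeAt (G : SimpleGraph V) (S : Set V) (x : V) : ℕ :=
  sInf {k | x ∈ pIter G S k}

/-- The percolation time of `G`: the maximum percolation time over all hull sets. -/
noncomputable def percolationTime (G : SimpleGraph V) : ℕ :=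
  sSup {t | ∃ S : Set V, Percolates G S ∧ percTime G S = t}

/-- A `P₃`-geodetic set: every vertex outside `S` has at least two neighbors in `S`. -/
def IsGeodetic (G : SimpleGraph V) (S : Set V) : Prop :=
  ∀ v, v ∉ S → ∃ u w, u ≠ w ∧ u ∈ S ∧ w ∈ S ∧ G.Adj u v ∧ G.Adj w v

/-- The `P₃`-geodetic number of `G`. -/
noncomputable def geodeticNumber (G : SimpleGraph V) : ℕ :=
  sInf {n | ∃ S : Set V, IsGeodetic G S ∧ S.ncard = n}

/-- The `P₃`-hull number of `G`. -/
noncomputable def hullNumber (G : SimpleGraph V) : ℕ :=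
  sInf {n | ∃ S : Set V, Percolates G S ∧ S.ncard = n}

/-- `G` is 2-connected: at least three vertices, connected, and no cut vertex. -/
def TwoConnected (G : SimpleGraph V) [Fintype V] : Prop :=
  3 ≤ Fintype.card V ∧ G.Connected ∧ ∀ v : V, (G.induce ({v}ᶜ : Set V)).Connected

/-- `G` is chordal: no induced cycle of length at least 4. -/
def IsChordal (G : SimpleGraph V) : Prop :=
  ∀ n : ℕ, 4 ≤ n → IsEmpty (cycleGraph n ↪g G)

/-! ### Auxiliary material -/

lemma fin_sub_val_eq_one {n : ℕ} (hn : 2 ≤ n) (i j : Fin n) :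
    ((j - i : Fin n) : ℕ) = 1 ↔ (j.val = i.val + 1 ∨ (i.val = n - 1 ∧ j.val = 0)) := by
  rcases i with ⟨i, hi⟩; rcases j with ⟨j, hj⟩
  rw [Fin.sub_def]
  simp only [Fin.val_mk]
  rcases le_or_gt i j with h | h
  · have h1 : n - i + j = (j - i) + n := by omega
    have h2 : j - i < n := by omega
    rw [h1, Nat.add_mod_right, Nat.mod_eq_of_lt h2]
    omega
  · have h1 : n - i + j = n - (i - j) := by omega
    have h2 : n - (i - j) < n := by omega
    rw [h1, Nat.mod_eq_of_lt h2]
    omega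

lemma cycleGraph_adj_iff' {n : ℕ} (hn : 2 ≤ n) (i j : Fin n) :
    (cycleGraph n).Adj i j ↔ ((j : ℕ) = (i : ℕ) + 1 ∨ (i : ℕ) = (j : ℕ) + 1 ∨
      ((i : ℕ) = n - 1 ∧ (j : ℕ) = 0) ∨ ((j : ℕ) = n - 1 ∧ (i : ℕ) = 0)) := by
  rw [cycleGraph_adj', fin_sub_val_eq_one hn, fin_sub_val_eq_one hn]
  tauto

/-- Walks inside a vertex set `H`. -/
def HChain (G : SimpleGraph V) (H : Set V) (a b : V) : Prop :=
  ∃ m, ∃ q : ℕ → V, q 0 = a ∧ q m = b ∧ (∀ i ≤ m, q i ∈ H) ∧ ∀ i < m, G.Adj (q i) (q (i+1))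

namespace HChain

variable {G : SimpleGraph V} {H : Set V} {a b c a' : V}

lemma refl (ha : a ∈ H) : HChain G H a a :=
  ⟨0, fun _ => a, rfl, rfl, fun _ _ => ha, fun i hi => absurd hi (by omega)⟩

lemma cons (ha : a' ∈ H) (hadj : G.Adj a' a) (h : HChain G H a b) : HChain G H a' b := by
  obtain ⟨m, q, h0, hm, hH, hA⟩ := h
  refine ⟨m + 1, fun i => if i = 0 then a' else q (i - 1), by simp, by simp [hm], ?_, ?_⟩
  · intro i hi
    by_cases h1 : i = 0
    · simpa [h1] using ha
    · simp only [if_neg h1]; exact hH _ (by omega)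
  · intro i hi
    by_cases h1 : i = 0
    · subst h1; simpa [h0] using hadj
    · simp only [h1, if_neg, if_neg (by omega : ¬ i + 1 = 0)]
      have := hA (i - 1) (by omega)
      simpa [show i - 1 + 1 = i by omega] using this

lemma symm (h : HChain G H a b) : HChain G H b a := by
  obtain ⟨m, q, h0, hm, hH, hA⟩ := h
  refine ⟨m, fun i => q (m - i), by simpa, by simpa, fun i hi => hH _ (by omega), ?_⟩
  intro i hi
  have := (hA (m - i - 1) (by omega)).symm
  simpa [show m - i - 1 + 1 = m - i by omega, show m - (i+1) = m - i - 1 by omega] using this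

lemma trans (h1 : HChain G H a b) (h2 : HChain G H b c) : HChain G H a c := by
  obtain ⟨m, q, q0, qm, qH, qA⟩ := h1
  obtain ⟨l, r, r0, rl, rH, rA⟩ := h2
  refine ⟨m + l, fun i => if i ≤ m then q i else r (i - m), by simp [q0], ?_, ?_, ?_⟩
  · by_cases hl : l = 0
    · simp [hl, qm, ← r0, hl ▸ rl]
    · simp only [if_neg (by omega : ¬ m + l ≤ m)]
      simpa using rl
  · intro i hi
    by_cases h : i ≤ m
    · simpa [h] using qH i h
    · simp only [if_neg h]; exact rH _ (by omega)
  · intro i hi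
    rcases lt_trichotomy i m with h | h | h
    · simpa [show i ≤ m by omega, show i + 1 ≤ m by omega] using qA i h
    · subst h
      simp only [if_pos le_rfl, if_neg (by omega : ¬ i + 1 ≤ i), show i + 1 - i = 1 from by omega]
      rw [qm, ← r0]
      exact rA 0 (by omega)
    · simp only [if_neg (by omega : ¬ i ≤ m), if_neg (by omega : ¬ i + 1 ≤ m)]
      have := rA (i - m) (by omega)
      simpa [show i + 1 - m = i - m + 1 by omega] using this

end HChain

/-- The hull of `S`. -/
def hull (G : SimpleGraph V) (S : Set V) : Set V := ⋃ k, pIter G S k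

lemma pIter_mono (G : SimpleGraph V) (S : Set V) {k l : ℕ} (h : k ≤ l) :
    pIter G S k ⊆ pIter G S l := by
  induction l with
  | zero => simpa [show k = 0 by omega] using subset_rfl
  | succ n ih =>
    rcases Nat.lt_or_ge k (n+1) with h' | h'
    · exact (ih (by omega)).trans Set.subset_union_left
    · simpa [show k = n + 1 by omega] using subset_rfl

lemma pIter_subset_hull (G : SimpleGraph V) (S : Set V) (k : ℕ) :
    pIter G S k ⊆ hull G S := Set.subset_iUnion (fun k => pIter G S k) k

lemma hull_closed {G : SimpleGraph V} {S : Set V} {a b c : V} (ha : a ∈ hull G S)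
    (hb : b ∈ hull G S) (hab : a ≠ b) (h1 : G.Adj a c) (h2 : G.Adj b c) : c ∈ hull G S := by
  obtain ⟨_, ⟨k1, rfl⟩, hk1⟩ := ha
  obtain ⟨_, ⟨k2, rfl⟩, hk2⟩ := hb
  apply pIter_subset_hull G S (max k1 k2 + 1)
  exact Or.inr ⟨a, b, hab, pIter_mono G S (le_max_left _ _) hk1,
    pIter_mono G S (le_max_right _ _) hk2, h1, h2⟩

lemma hull_chain_to_u {G : SimpleGraph V} {u v x : V} (huv : u ≠ v) (hux : G.Adj u x)
    (hvx : G.Adj v x) : ∀ k, ∀ a ∈ pIter G {u, v} k, HChain G (hull G {u, v}) a u := by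
  have hu : u ∈ hull G {u, v} := pIter_subset_hull G _ 0 (Set.mem_insert _ _)
  have hv : v ∈ hull G {u, v} :=
    pIter_subset_hull G _ 0 (Set.mem_insert_of_mem _ rfl)
  have hx : x ∈ hull G {u, v} := hull_closed hu hv huv hux hvx
  intro k
  induction k with
  | zero =>
    intro a ha
    rcases ha with rfl | ha
    · exact HChain.refl hu
    · rw [Set.mem_singleton_iff] at ha
      subst ha
      exact HChain.cons hv hvx (HChain.cons hx hux.symm (HChain.refl hu))
  | succ n ih =>
    intro a ha
    rcases ha with ha | ⟨p, r, hpr, hp, hr, hpa, hra⟩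
    · exact ih a ha
    · exact HChain.cons (pIter_subset_hull G _ (n+1)
        (Or.inr ⟨p, r, hpr, hp, hr, hpa, hra⟩)) hpa.symm (ih p hp)

lemma hull_hchain {G : SimpleGraph V} {u v x : V} (huv : u ≠ v) (hux : G.Adj u x)
    (hvx : G.Adj v x) {a b : V} (ha : a ∈ hull G {u, v}) (hb : b ∈ hull G {u, v}) :
    HChain G (hull G {u, v}) a b := by
  obtain ⟨_, ⟨k1, rfl⟩, hk1⟩ := ha
  obtain ⟨_, ⟨k2, rfl⟩, hk2⟩ := hb
  exact (hull_chain_to_u huv hux hvx k1 a hk1).trans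
    (hull_chain_to_u huv hux hvx k2 b hk2).symm

lemma splice {G : SimpleGraph V} {w : ℕ → V} {N i j : ℕ} (hij : i < j) (hjN : j ≤ N)
    (hA : ∀ t < N, G.Adj (w t) (w (t+1))) (hadj : G.Adj (w i) (w j)) :
    ∃ w' : ℕ → V, (∀ t ≤ i, w' t = w t) ∧ (∀ t, i < t → w' t = w (t + (j - i - 1))) ∧
      ∀ t < N - (j - i - 1), G.Adj (w' t) (w' (t+1)) := by
  refine ⟨fun t => if t ≤ i then w t else w (t + (j - i - 1)), fun t ht => if_pos ht,
    fun t ht => if_neg (by omega), ?_⟩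
  intro t ht
  rcases lt_trichotomy t i with h | h | h
  · simpa [show t ≤ i by omega, show t + 1 ≤ i by omega] using hA t (by omega)
  · subst h
    simp only [if_pos le_rfl, if_neg (by omega : ¬ t + 1 ≤ t)]
    rw [show t + 1 + (j - t - 1) = j by omega]
    exact hadj
  · simp only [if_neg (by omega : ¬ t ≤ i), if_neg (by omega : ¬ t + 1 ≤ i)]
    have := hA (t + (j - i - 1)) (by omega)
    rw [show t + 1 + (j - i - 1) = t + (j - i - 1) + 1 by omega]
    exact this

/-- In a 2-connected chordal graph, two vertices with a common neighbor form a hull set. -/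
theorem pair_with_common_neighbor_is_hull_set {V : Type*} [Fintype V]
    (G : SimpleGraph V) (h2 : TwoConnected G) (hch : IsChordal G)
    (u v : V) (huv : u ≠ v) (x : V) (hux : G.Adj u x) (hvx : G.Adj v x) :
    Percolates G {u, v} := by
  have hu : u ∈ hull G {u, v} := pIter_subset_hull G _ 0 (Set.mem_insert _ _)
  have hv : v ∈ hull G {u, v} := pIter_subset_hull G _ 0 (Set.mem_insert_of_mem _ rfl)
  have hHuniv : hull G {u, v} = Set.univ := by
    by_contra hne
    obtain ⟨c, hc⟩ : ∃ c, c ∉ hull G {u, v} := by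
      by_contra h
      push_neg at h
      exact hne (Set.eq_univ_of_forall h)
    obtain ⟨hcard, hconn, hcut⟩ := h2
    set H := hull G {u, v} with hHdef
    have hx : x ∈ H := hull_closed hu hv huv hux hvx
    have hnotwo : ∀ c', c' ∉ H → ∀ p r, p ∈ H → r ∈ H → p ≠ r →
        G.Adj p c' → G.Adj r c' → False :=
      fun c' hc' p r hp hr hpr h1 h2' => hc' (hull_closed hp hr hpr h1 h2')
    have hchain : ∀ a b : V, a ∈ H → b ∈ H → HChain G H a b :=
      fun a b ha hb => hull_hchain huv hux hvx ha hb
    -- ### Step 1: there is an "outside path" between two distinct vertices of `H`.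
    set K : Set ℕ := {k | 1 ≤ k ∧ ∃ a b, ∃ w : ℕ → V, a ∈ H ∧ b ∈ H ∧ a ≠ b ∧ w 0 = a ∧
      w (k+1) = b ∧ (∀ i, 1 ≤ i → i ≤ k → w i ∉ H) ∧ ∀ i ≤ k, G.Adj (w i) (w (i+1))}
      with hKdef
    have hKne : K.Nonempty := by
      -- first crossing of a walk from `c` to `u`
      obtain ⟨W⟩ := hconn.preconnected c u
      have hJne : W.length ∈ {j | W.getVert j ∈ H} := by
        simp only [Set.mem_setOf_eq, W.getVert_length]; exact hu
      set j0 : ℕ := sInf {j | W.getVert j ∈ H} with hj0def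
      have hj0H' : j0 ∈ {j | W.getVert j ∈ H} := Nat.sInf_mem ⟨W.length, hJne⟩
      have hj0H : W.getVert j0 ∈ H := hj0H'
      have hj0le : j0 ≤ W.length := Nat.sInf_le hJne
      have hj0pos : 1 ≤ j0 := by
        rcases Nat.eq_zero_or_pos j0 with h | h
        · exact absurd (h ▸ hj0H) (by rw [W.getVert_zero]; exact hc)
        · exact h
      have hc0 : W.getVert (j0 - 1) ∉ H := fun h =>
        absurd (Nat.sInf_le (show j0 - 1 ∈ {j | W.getVert j ∈ H} from h)) (by omega)
      have hadj0 : G.Adj (W.getVert (j0 - 1)) (W.getVert j0) := by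
        have := W.adj_getVert_succ (i := j0 - 1) (by omega)
        rwa [show j0 - 1 + 1 = j0 by omega] at this
      set a0 : V := W.getVert j0 with ha0def
      set c0 : V := W.getVert (j0 - 1) with hc0def
      -- a second anchor, via 2-connectivity
      have hy : ∃ y, y ∈ H ∧ y ≠ a0 := by
        by_cases h : a0 = u
        · exact ⟨v, hv, fun hyv => huv (h.symm.trans hyv.symm)⟩
        · exact ⟨u, hu, fun hyu => h hyu.symm⟩
      obtain ⟨y, hyH, hyne⟩ := hy
      have hc0ne : c0 ∈ ({a0}ᶜ : Set V) :=
        Set.mem_compl_singleton_iff.mpr (fun h => hc0 (h ▸ hj0H))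
      have hyne' : y ∈ ({a0}ᶜ : Set V) := Set.mem_compl_singleton_iff.mpr hyne
      obtain ⟨W2⟩ := (hcut a0).preconnected ⟨c0, hc0ne⟩ ⟨y, hyne'⟩
      set p : ℕ → V := fun i => (W2.getVert i : V) with hpdef
      have hpadj : ∀ i < W2.length, G.Adj (p i) (p (i+1)) :=
        fun i hi => W2.adj_getVert_succ hi
      have hp0 : p 0 = c0 := congrArg Subtype.val W2.getVert_zero
      have hpL : p W2.length = y := congrArg Subtype.val W2.getVert_length
      have hpne : ∀ i, p i ≠ a0 := fun i =>
        Set.mem_compl_singleton_iff.mp (W2.getVert i).2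
      have hLJ : W2.length ∈ {j | p j ∈ H} := by
        simp only [Set.mem_setOf_eq, hpL]; exact hyH
      set j1 : ℕ := sInf {j | p j ∈ H} with hj1def
      have hj1H' : j1 ∈ {j | p j ∈ H} := Nat.sInf_mem ⟨W2.length, hLJ⟩
      have hj1H : p j1 ∈ H := hj1H'
      have hj1le : j1 ≤ W2.length := Nat.sInf_le hLJ
      have hj1pos : 1 ≤ j1 := by
        rcases Nat.eq_zero_or_pos j1 with h | h
        · exact absurd (h ▸ hj1H) (by rw [hp0]; exact hc0)
        · exact h
      have hbelow : ∀ i < j1, p i ∉ H := fun i hi h =>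
        absurd (Nat.sInf_le (show i ∈ {j | p j ∈ H} from h)) (by omega)
      refine ⟨j1, hj1pos, a0, p j1, fun i => if i = 0 then a0 else p (i - 1),
        hj0H, hj1H, (hpne j1).symm, rfl, ?_, ?_, ?_⟩
      · simp only [if_neg (by omega : ¬ j1 + 1 = 0)]
        rw [show j1 + 1 - 1 = j1 by omega]
      · intro i h1 h2
        simp only [if_neg (by omega : ¬ i = 0)]
        exact hbelow (i - 1) (by omega)
      · intro i hi
        by_cases h : i = 0
        · subst h
          simpa [hp0] using hadj0.symm
        · simp only [if_neg h, if_neg (by omega : ¬ i + 1 = 0)]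
          have := hpadj (i - 1) (by omega)
          simpa [show i - 1 + 1 = i by omega] using this
    -- ### Step 2: take a shortest outside path and derive its properties.
    set k : ℕ := sInf K with hkdef
    obtain ⟨hk1, a, b, w, haH, hbH, hab, hw0, hwk, hwout, hwadj⟩ := Nat.sInf_mem hKne
    have hkmin : ∀ k', k' < k → k' ∉ K := fun k' h => Nat.notMem_of_lt_sInf h
    have hkK : ∀ k' ∈ K, k ≤ k' := fun k' h => Nat.sInf_le h
    have hk2 : 2 ≤ k := by
      by_contra h
      have hk1' : k = 1 := by omega
      exact hnotwo (w 1) (hwout 1 le_rfl (by omega)) a b haH hbH hab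
        (hw0 ▸ hwadj 0 (by omega))
        (by have := (hwadj 1 (by omega)).symm; rwa [show 1 + 1 = k + 1 by omega, hwk] at this)
    have P2 : ∀ i, 1 ≤ i → i ≤ k → ∀ h', h' ∈ H → G.Adj (w i) h' →
        (i = 1 ∧ h' = a) ∨ (i = k ∧ h' = b) := by
      intro i hi1 hik h' hh' hadj'
      by_cases hha : h' = a
      · subst hha
        by_cases hi1' : i = 1
        · exact Or.inl ⟨hi1', rfl⟩
        · exfalso
          -- reverse the tail of the walk: a (= h'), w i, w (i+1), ..., w k, b
          apply hkmin (k - i + 1) (by omega)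
          refine ⟨by omega, h', b, fun t => if t = 0 then h' else w (i + t - 1),
            hh', hbH, hab, rfl, ?_, ?_, ?_⟩
          · simp only [if_neg (by omega : ¬ k - i + 1 + 1 = 0)]
            rw [show i + (k - i + 1 + 1) - 1 = k + 1 by omega, hwk]
          · intro t h1 h2
            simp only [if_neg (by omega : ¬ t = 0)]
            exact hwout (i + t - 1) (by omega) (by omega)
          · intro t ht
            by_cases h0 : t = 0
            · subst h0
              simp only [if_pos rfl, if_neg (by omega : ¬ (0:ℕ) + 1 = 0)]
              rw [show i + (0 + 1) - 1 = i by omega]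
              exact hadj'.symm
            · simp only [if_neg h0, if_neg (by omega : ¬ t + 1 = 0)]
              have := hwadj (i + t - 1) (by omega)
              rwa [show i + t - 1 + 1 = i + (t + 1) - 1 by omega] at this
      · -- truncate the walk at `w i` and append `h'`
        have hiK : i ∈ K := by
          refine ⟨hi1, a, h', fun t => if t ≤ i then w t else h', haH, hh',
            fun h => hha h.symm, by simp [hw0], by simp, ?_, ?_⟩
          · intro t h1 h2
            simp only [if_pos h2]
            exact hwout t h1 (by omega)
          · intro t ht
            rcases lt_or_eq_of_le ht with h | h
            · simpa [show t ≤ i by omega, show t + 1 ≤ i by omega] using hwadj t (by omega)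
            · subst h
              simpa [if_pos le_rfl, if_neg (by omega : ¬ t + 1 ≤ t)] using hadj'
        have hik' : i = k := le_antisymm hik (hkK i hiK)
        by_cases hhb : h' = b
        · exact Or.inr ⟨hik', hhb⟩
        · exfalso
          have hwkb : G.Adj (w i) b := by
            have := hwadj i (by omega)
            rwa [show i + 1 = k + 1 by omega, hwk] at this
          exact hnotwo (w i) (hwout i hi1 hik) h' b hh' hbH hhb hadj'.symm hwkb.symm
    have P3a : ∀ i j, 1 ≤ i → i + 2 ≤ j → j ≤ k → ¬ G.Adj (w i) (w j) := by
      intro i j hi1 hij hjk hadj'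
      obtain ⟨w', e1, e2, hA'⟩ := splice (N := k + 1) (by omega : i < j) (by omega)
        (fun t ht => hwadj t (by omega)) hadj'
      apply hkmin (k - (j - i - 1)) (by omega)
      refine ⟨by omega, a, b, w', haH, hbH, hab, by rw [e1 0 (by omega), hw0],
        by rw [e2 _ (by omega),
          show k - (j - i - 1) + 1 + (j - i - 1) = k + 1 by omega, hwk], ?_, ?_⟩
      · intro t h1 h2
        by_cases h : t ≤ i
        · rw [e1 t h]; exact hwout t h1 (by omega)
        · rw [e2 t (by omega)]; exact hwout _ (by omega) (by omega)
      · intro t ht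
        exact hA' t (by omega)
    have P3b : ∀ i j, 1 ≤ i → i < j → j ≤ k → w i ≠ w j := by
      intro i j hi1 hij hjk heq
      have hadj' : G.Adj (w i) (w (j + 1)) := by rw [heq]; exact hwadj j hjk
      obtain ⟨w', e1, e2, hA'⟩ := splice (N := k + 1) (by omega : i < j + 1) (by omega)
        (fun t ht => hwadj t (by omega)) hadj'
      apply hkmin (k - (j - i)) (by omega)
      refine ⟨by omega, a, b, w', haH, hbH, hab, by rw [e1 0 (by omega), hw0],
        by rw [e2 _ (by omega),
          show k - (j - i) + 1 + (j + 1 - i - 1) = k + 1 by omega, hwk], ?_, ?_⟩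
      · intro t h1 h2
        by_cases h : t ≤ i
        · rw [e1 t h]; exact hwout t h1 (by omega)
        · rw [e2 t (by omega)]; exact hwout _ (by omega) (by omega)
      · intro t ht
        exact hA' t (by omega)
    -- ### Step 3: take a shortest path between the anchors inside `H`.
    set M : Set ℕ := {m | ∃ q : ℕ → V, q 0 = a ∧ q m = b ∧ (∀ i ≤ m, q i ∈ H) ∧
      ∀ i < m, G.Adj (q i) (q (i+1))} with hMdef
    have hMne : M.Nonempty := by
      obtain ⟨m, q, h⟩ := hchain a b haH hbH
      exact ⟨m, q, h⟩
    set m : ℕ := sInf M with hmdef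
    obtain ⟨q, hq0, hqm, hqH, hqA⟩ := Nat.sInf_mem hMne
    have hmmin : ∀ m', m' < m → m' ∉ M := fun m' h => Nat.notMem_of_lt_sInf h
    have hm1 : 1 ≤ m := by
      rcases Nat.eq_zero_or_pos m with h | h
      · exact absurd (hq0 ▸ h ▸ hqm) hab
      · exact h
    have Q1 : ∀ i j, i < j → j ≤ m → q i ≠ q j := by
      intro i j hij hjm heq
      rcases lt_or_eq_of_le hjm with hjm' | hjm'
      · -- j < m : splice out the repetition
        have hadj' : G.Adj (q i) (q (j + 1)) := by rw [heq]; exact hqA j hjm'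
        obtain ⟨q', e1, e2, hA'⟩ := splice (N := m) (by omega : i < j + 1) (by omega)
          hqA hadj'
        apply hmmin (m - (j - i)) (by omega)
        refine ⟨q', by rw [e1 0 (by omega), hq0], by rw [e2 _ (by omega : i < m - (j - i)),
          show m - (j - i) + (j + 1 - i - 1) = m by omega, hqm], ?_, ?_⟩
        · intro t ht
          by_cases h : t ≤ i
          · rw [e1 t h]; exact hqH t (by omega)
          · rw [e2 t (by omega)]; exact hqH _ (by omega)
        · intro t ht
          exact hA' t (by omega)
      · -- j = m : just cut the walk at `i`
        apply hmmin i (by omega)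
        exact ⟨q, hq0, by rw [heq, hjm', hqm], fun t ht => hqH t (by omega),
          fun t ht => hqA t (by omega)⟩
    have Q2 : ∀ i j, i + 2 ≤ j → j ≤ m → ¬ G.Adj (q i) (q j) := by
      intro i j hij hjm hadj'
      obtain ⟨q', e1, e2, hA'⟩ := splice (N := m) (by omega : i < j) (by omega) hqA hadj'
      apply hmmin (m - (j - i - 1)) (by omega)
      refine ⟨q', by rw [e1 0 (by omega), hq0], by rw [e2 _ (by omega),
        show m - (j - i - 1) + (j - i - 1) = m by omega, hqm], ?_, ?_⟩
      · intro t ht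
        by_cases h : t ≤ i
        · rw [e1 t h]; exact hqH t (by omega)
        · rw [e2 t (by omega)]; exact hqH _ (by omega)
      · intro t ht
        exact hA' t (by omega)
    -- ### Step 4: build an induced cycle of length `m + k + 1 ≥ 4`.
    set n : ℕ := m + k + 1 with hndef
    have hn4 : 4 ≤ n := by omega
    set Fv : ℕ → V := fun t => if t ≤ m then q t else w (n - t) with hFvdef
    have eq1 : ∀ t, t ≤ m → Fv t = q t := fun t ht => if_pos ht
    have eq2 : ∀ t, m < t → Fv t = w (n - t) := fun t ht => if_neg (by omega)
    have hedge : ∀ t, t + 1 < n → G.Adj (Fv t) (Fv (t + 1)) := by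
      intro t ht
      rcases lt_trichotomy t m with h | h | h
      · rw [eq1 t (by omega), eq1 (t+1) (by omega)]
        exact hqA t h
      · rw [eq1 t (by omega), eq2 (t+1) (by omega), show n - (t+1) = k by omega, h, hqm]
        have := hwadj k le_rfl
        rw [hwk] at this
        exact this.symm
      · rw [eq2 t h, eq2 (t+1) (by omega)]
        have := hwadj (n - t - 1) (by omega)
        rw [show n - t - 1 + 1 = n - t by omega] at this
        rw [show n - (t+1) = n - t - 1 by omega]
        exact this.symm
    have hwrap : G.Adj (Fv (n - 1)) (Fv 0) := by
      rw [eq2 (n-1) (by omega), eq1 0 (by omega), show n - (n - 1) = 1 by omega, hq0, ← hw0]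
      exact (hwadj 0 (by omega)).symm
    have hnadj : ∀ t s, t < s → s < n → s ≠ t + 1 → ¬(t = 0 ∧ s = n - 1) →
        ¬ G.Adj (Fv t) (Fv s) := by
      intro t s hts hsn hcons hwrapc hadj'
      rcases le_or_gt s m with hsm | hsm
      · rw [eq1 t (by omega), eq1 s hsm] at hadj'
        exact Q2 t s (by omega) hsm hadj'
      · rcases le_or_gt t m with htm | htm
        · rw [eq1 t htm, eq2 s hsm] at hadj'
          have := P2 (n - s) (by omega) (by omega) (q t) (hqH t htm) hadj'.symm
          rcases this with ⟨h1, h2⟩ | ⟨h1, h2⟩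
          · have ht0 : t = 0 := by
              by_contra h
              exact Q1 0 t (by omega) (by omega) (by rw [hq0, ← h2])
            exact hwrapc ⟨ht0, by omega⟩
          · have htm' : t = m := by
              by_contra h
              exact Q1 t m (by omega) le_rfl (by rw [h2, ← hqm])
            exact hcons (by omega)
        · rw [eq2 t htm, eq2 s hsm] at hadj'
          exact P3a (n - s) (n - t) (by omega) (by omega) (by omega) hadj'.symm
    have hFinj : ∀ t s : ℕ, t < s → s < n → Fv t ≠ Fv s := by
      intro t s hts hsn heq
      rcases le_or_gt s m with hsm | hsm
      · rw [eq1 t (by omega), eq1 s hsm] at heq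
        exact Q1 t s hts hsm heq
      · rcases le_or_gt t m with htm | htm
        · rw [eq1 t htm, eq2 s hsm] at heq
          exact hwout (n - s) (by omega) (by omega) (heq ▸ hqH t htm)
        · rw [eq2 t htm, eq2 s hsm] at heq
          exact P3b (n - s) (n - t) (by omega) (by omega) (by omega) heq.symm
    refine (hch n hn4).false ⟨⟨fun t => Fv t.val, ?_⟩, @fun t s => ?_⟩
    · intro t s h
      dsimp only at h
      by_contra hne'
      have hv : t.val ≠ s.val := fun hv => hne' (Fin.ext hv)
      rcases lt_or_gt_of_ne hv with hlt | hlt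
      · exact hFinj _ _ hlt s.isLt h
      · exact hFinj _ _ hlt t.isLt h.symm
    · show G.Adj (Fv t.val) (Fv s.val) ↔ (cycleGraph n).Adj t s
      rw [cycleGraph_adj_iff' (by omega)]
      have hs := s.isLt
      have ht := t.isLt
      constructor
      · intro hadj'
        by_contra hnot
        push_neg at hnot
        obtain ⟨h1, h2, h3, h4⟩ := hnot
        rcases lt_trichotomy t.val s.val with hlt | heqv | hlt
        · exact hnadj t.val s.val hlt s.isLt h1 (fun hp => h4 hp.2 hp.1) hadj'
        · rw [← heqv] at hadj'
          exact G.loopless.irrefl _ hadj'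
        · exact hnadj s.val t.val hlt t.isLt h2 (fun hp => h3 hp.2 hp.1) hadj'.symm
      · intro hcyc
        rcases hcyc with h | h | ⟨h, h'⟩ | ⟨h, h'⟩
        · rw [show (s : ℕ) = (t : ℕ) + 1 from h]
          exact hedge t.val (by omega)
        · rw [show (t : ℕ) = (s : ℕ) + 1 from h]
          exact (hedge s.val (by omega)).symm
        · rw [show (t : ℕ) = n - 1 from h, show (s : ℕ) = 0 from h']
          exact hwrap
        · rw [show (s : ℕ) = n - 1 from h, show (t : ℕ) = 0 from h']
          exact hwrap.symm
  -- ### Conclusion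
  have key : ∀ y : V, ∃ ky, y ∈ pIter G {u, v} ky := by
    intro y
    have : y ∈ hull G {u, v} := hHuniv ▸ Set.mem_univ y
    exact Set.mem_iUnion.mp this
  choose f hf using key
  refine ⟨Finset.univ.sup f, Set.eq_univ_of_forall fun y => ?_⟩
  exact pIter_mono G _ (Finset.le_sup (Finset.mem_univ y)) (hf y)
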